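/- Let K be a field and F = {f_1,...,f_s} polynomials in (K[x_1])[x_2,...,x_n], none in K[x_1], all having the same leading monomial x̃^α. If f = f_1 + ... + f_s satisfies lm(f) ≺ x̃^α, then there exist nonzero multipliers b, b_1,...,b_{s−1} ∈ K[x_1] such that b·f = Σ_{j=1}^{s−1} b_j·S(f_j, f_s). Concretely one may take m_j = lcm(lc(f_j), lc(f_s)), b = lcm_{1≤j<s}(m_j/lc(f_j)), and b_j = b·lc(f_j)/m_j. -/

import Mathlib

open MvPolynomial

/-- The leading monomial (exponent) of `f` with respect to the monomial order `m`,
taken over the coefficient ring. -/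
noncomputable def mdeg {σ : Type*} (m : MonomialOrder σ) {R : Type*} [CommSemiring R]
    (f : MvPolynomial σ R) : σ →₀ ℕ :=
  m.toSyn.symm (f.support.sup fun d => m.toSyn d)

/-- The leading coefficient of `f` with respect to the monomial order `m`. -/
noncomputable def lC {σ : Type*} (m : MonomialOrder σ) {R : Type*} [CommSemiring R]
    (f : MvPolynomial σ R) : R :=
  f.coeff (mdeg m f)

/-- The leading term of `f` with respect to the monomial order `m`. -/
noncomputable def lT {σ : Type*} (m : MonomialOrder σ) {R : Type*} [CommSemiring R]
    (f : MvPolynomial σ R) : MvPolynomial σ R :=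
  monomial (mdeg m f) (lC m f)

/-- `d` is a greatest common divisor of `a` and `b` (gcd's are unique up to units). -/
def IsGcd {α : Type*} [CommMonoid α] (d a b : α) : Prop :=
  d ∣ a ∧ d ∣ b ∧ ∀ e, e ∣ a → e ∣ b → e ∣ d

/-- `l` is a least common multiple of `a` and `b` (lcm's are unique up to units). -/
def IsLcm {α : Type*} [CommMonoid α] (l a b : α) : Prop :=
  a ∣ l ∧ b ∣ l ∧ ∀ e, a ∣ e → b ∣ e → l ∣ e

open scoped Classical in
noncomputable def fieldNormalization (K : Type*) [Field K] : NormalizationMonoid K where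
  normUnit a := if h : a = 0 then 1 else (Units.mk0 a h)⁻¹
  normUnit_zero := dif_pos rfl
  normUnit_one := by
    beta_reduce
    rw [dif_neg one_ne_zero]; ext; simp
  normUnit_mul_units {a} u ha := by
    beta_reduce
    rw [dif_neg (mul_ne_zero ha u.ne_zero), dif_neg ha, ← mul_inv]
    congr 1; ext; simp [mul_comm]

lemma mdeg_mem_support {σ R : Type*} [CommSemiring R] (m : MonomialOrder σ)
    {f : MvPolynomial σ R} (hf : f ≠ 0) : mdeg m f ∈ f.support := by
  obtain ⟨d, hd, hds⟩ := Finset.exists_mem_eq_sup f.support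
    (Finset.nonempty_iff_ne_empty.mpr (fun h => hf (MvPolynomial.support_eq_empty.mp h)))
    (fun d => m.toSyn d)
  rw [mdeg, hds, AddEquiv.symm_apply_apply]
  exact hd

lemma lC_ne_zero {σ R : Type*} [CommSemiring R] (m : MonomialOrder σ)
    {f : MvPolynomial σ R} (hf : f ≠ 0) : lC m f ≠ 0 :=
  MvPolynomial.mem_support_iff.mp (mdeg_mem_support m hf)

lemma coeff_eq_zero_of_mdeg_lt {σ R : Type*} [CommSemiring R] {m : MonomialOrder σ}
    {f : MvPolynomial σ R} {α : σ →₀ ℕ} (h : m.toSyn (mdeg m f) < m.toSyn α) :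
    f.coeff α = 0 := by
  by_contra hc
  have hmem : α ∈ f.support := MvPolynomial.mem_support_iff.mpr hc
  have hle : m.toSyn α ≤ f.support.sup (fun d => m.toSyn d) := Finset.le_sup hmem
  rw [mdeg, AddEquiv.apply_symm_apply] at h
  exact absurd hle (not_le.mpr h)

/-- **Syzygy lemma over `K[x₁]`.**  If `f_1, …, f_{s+1} ∉ K[x₁]` all have leading
monomial `x̃^α` and `f = f_1 + ⋯ + f_{s+1}` has `lm f ≺ x̃^α`, then there are nonzero
`b, b_1, …, b_s ∈ K[x₁]` with `b·f = ∑_j b_j·S(f_j, f_{s+1})`.  Concretely, with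
`m_j = lcm(lc f_j, lc f_{s+1}) = lc f_j·u_j`, one may take `b = lcm_j(u_j)` and
`b_j = b·lc f_j/m_j` (i.e. `b·lc f_j = b_j·m_j`). -/
theorem syzygy_lemma {σ K : Type*} [Field K] (m : MonomialOrder σ) (s : ℕ)
    (f : Fin (s + 1) → MvPolynomial σ (Polynomial K))
    (hfR : ∀ j, f j ∉ Set.range (C : Polynomial K → MvPolynomial σ (Polynomial K)))
    (α : σ →₀ ℕ) (hα : ∀ j, mdeg m (f j) = α)
    (hlt : m.toSyn (mdeg m (∑ j, f j)) < m.toSyn α)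
    (M u v : Fin s → Polynomial K)
    (hM : ∀ j, IsLcm (M j) (lC m (f j.castSucc)) (lC m (f (Fin.last s))))
    (hu : ∀ j, M j = lC m (f j.castSucc) * u j)
    (hv : ∀ j, M j = lC m (f (Fin.last s)) * v j) :
    ∃ (b : Polynomial K) (bs : Fin s → Polynomial K),
      b ≠ 0 ∧ (∀ j, bs j ≠ 0) ∧
      C b * (∑ j, f j) =
        ∑ j, C (bs j) * (C (u j) * f j.castSucc - C (v j) * f (Fin.last s)) ∧
      (∀ j, u j ∣ b) ∧ (∀ e, (∀ j, u j ∣ e) → b ∣ e) ∧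
      (∀ j, b * lC m (f j.castSucc) = bs j * M j) := by
  classical
  letI := fieldNormalization K
  letI : NormalizedGCDMonoid (Polynomial K) := UniqueFactorizationMonoid.toNormalizedGCDMonoid _
  set c : Fin (s + 1) → Polynomial K := fun j => lC m (f j) with hc
  have hf0 : ∀ j, f j ≠ 0 := fun j h => hfR j ⟨0, by simp [h]⟩
  have hc0 : ∀ j, c j ≠ 0 := fun j => lC_ne_zero m (hf0 j)
  -- the coefficients at α sum to zero
  have hsum : ∑ j, c j = 0 := by
    have h0 : (∑ j, f j).coeff α = 0 := coeff_eq_zero_of_mdeg_lt hlt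
    rw [MvPolynomial.coeff_sum] at h0
    rw [← h0]
    exact Finset.sum_congr rfl fun j _ => by rw [hc]; simp only [lC, hα j]
  -- M j and u j, v j are nonzero
  have hM0 : ∀ j, M j ≠ 0 := by
    intro j hMj
    have : M j ∣ c j.castSucc * c (Fin.last s) :=
      (hM j).2.2 _ ⟨c (Fin.last s), rfl⟩ ⟨c j.castSucc, mul_comm _ _⟩
    rw [hMj] at this
    exact mul_ne_zero (hc0 j.castSucc) (hc0 (Fin.last s)) (zero_dvd_iff.mp this)
  have hu0 : ∀ j, u j ≠ 0 := fun j huj => hM0 j (by rw [hu j, huj, mul_zero])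
  have hv0 : ∀ j, v j ≠ 0 := fun j hvj => hM0 j (by rw [hv j, hvj, mul_zero])
  -- define b as the lcm of the u j
  set b : Polynomial K := Finset.univ.lcm u with hbdef
  have hub : ∀ j, u j ∣ b := fun j => Finset.dvd_lcm (Finset.mem_univ j)
  have hb0 : b ≠ 0 := by
    intro h
    rw [hbdef] at h
    obtain ⟨j, -, hj⟩ := Finset.lcm_eq_zero_iff.mp h
    exact hu0 j hj
  set bs : Fin s → Polynomial K := fun j => b / u j with hbs
  have hbub : ∀ j, bs j * u j = b := fun j => by
    rw [hbs, mul_comm]; exact EuclideanDomain.mul_div_cancel' (hu0 j) (hub j)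
  have hbs0 : ∀ j, bs j ≠ 0 := by
    intro j h
    apply hb0
    rw [← hbub j, h, zero_mul]
  have hkey : ∀ j, b * c j.castSucc = bs j * M j := by
    intro j
    rw [hu j, ← hbub j]; ring
  -- ∑ bs j * v j = -b
  have hbv : ∑ j, bs j * v j = -b := by
    apply mul_right_cancel₀ (hc0 (Fin.last s))
    rw [Finset.sum_mul]
    have : ∀ j ∈ Finset.univ, bs j * v j * c (Fin.last s) = b * c j.castSucc := by
      intro j _
      rw [hkey j, hv j]; ring
    rw [Finset.sum_congr rfl this, ← Finset.mul_sum]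
    have hlast : ∑ j : Fin s, c j.castSucc = -c (Fin.last s) := by
      have := hsum
      rw [Fin.sum_univ_castSucc] at this
      linear_combination this
    rw [hlast]; ring
  refine ⟨b, bs, hb0, hbs0, ?_, hub, fun e he => Finset.lcm_dvd fun j _ => he j, hkey⟩
  calc C b * (∑ j, f j)
      = ∑ j : Fin s, C b * f j.castSucc + C b * f (Fin.last s) := by
        rw [Fin.sum_univ_castSucc, mul_add, Finset.mul_sum]
    _ = ∑ j : Fin s, C b * f j.castSucc
        - C (∑ j, bs j * v j) * f (Fin.last s) := by
        rw [hbv, map_neg]; ring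
    _ = ∑ j : Fin s, (C b * f j.castSucc - C (bs j * v j) * f (Fin.last s)) := by
        rw [Finset.sum_sub_distrib, map_sum, Finset.sum_mul]
    _ = ∑ j, C (bs j) * (C (u j) * f j.castSucc - C (v j) * f (Fin.last s)) := by
        refine Finset.sum_congr rfl fun j _ => ?_
        rw [← hbub j, map_mul, map_mul]; ring
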